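/- Let k be a field and n ≥ 3 an integer, and let Aₙ be the quotient of the free associative unital k-algebra on x₁,…,xₙ by the two-sided ideal generated by [[x_i, x_{i+2}], x_{i+1}], i = 1,…,n−2. Set p_{i,i} = x_{i+2} x_{i+1}, p_{i,i+1} = x_{i+2} x_i − x_i x_{i+2}, p_{i,i+2} = −x_i x_{i+1}, and p_{ij} = 0 for other j. If elements a₁,…,aₙ ∈ Aₙ satisfy Σ_{j=1}^n x̄_j a_j = 0 in Aₙ, then there exist b₁,…,b_{n−2} ∈ Aₙ such that a_j = Σ_{i=1}^{n−2} p̄_{ij} b_i for every j = 1,…,n. -/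

import Mathlib

open scoped BigOperators

noncomputable section

universe u

/-- The generator index `i + t` (0-based): for the `i`-th relation (`i = 0,…,n-3`),
the letters involved are `x_i, x_{i+1}, x_{i+2}`. -/
def genIdx (n : ℕ) (i : Fin (n - 2)) (t : Fin 3) : Fin n :=
  ⟨i.val + t.val, by have hi := i.isLt; have ht := t.isLt; omega⟩

/-- The relation `[[x_i, x_{i+2}], x_{i+1}] =
x_i x_{i+2} x_{i+1} − x_{i+2} x_i x_{i+1} − x_{i+1} x_i x_{i+2} + x_{i+1} x_{i+2} x_i`
(written 0-based) in the free associative unital algebra `F = k⟨x_1,…,x_n⟩`. -/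
def lieRel (k : Type) [Field k] (n : ℕ) (i : Fin (n - 2)) : FreeAlgebra k (Fin n) :=
  let X : Fin 3 → FreeAlgebra k (Fin n) := fun t => FreeAlgebra.ι k (genIdx n i t)
  X 0 * X 2 * X 1 - X 2 * X 0 * X 1 - X 1 * X 0 * X 2 + X 1 * X 2 * X 0

/-- The relation identifying each `[[x_i, x_{i+2}], x_{i+1}]` with `0`; quotienting the free
algebra by (the ring congruence generated by) this relation is exactly quotienting by the
two-sided ideal generated by these elements. -/
def lieRelRel (k : Type) [Field k] (n : ℕ) (a b : FreeAlgebra k (Fin n)) : Prop :=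
  b = 0 ∧ ∃ i : Fin (n - 2), a = lieRel k n i

/-- The algebra `Aₙ = k⟨x_1,…,x_n⟩ / ([[x_i, x_{i+2}], x_{i+1}], i = 1,…,n-2)`. -/
abbrev AnAlg (k : Type) [Field k] (n : ℕ) : Type :=
  RingQuot (lieRelRel k n)

/-- The image `x̄_j` of the generator `x_j` in `Aₙ`. -/
def XbarL (k : Type) [Field k] (n : ℕ) (j : Fin n) : AnAlg k n :=
  RingQuot.mkAlgHom k (lieRelRel k n) (FreeAlgebra.ι k j)

/-- The elements `p_{ij}` of the free algebra: `p_{i,i} = x_{i+2} x_{i+1}`,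
`p_{i,i+1} = x_{i+2} x_i − x_i x_{i+2}`, `p_{i,i+2} = −x_i x_{i+1}`, and `p_{ij} = 0`
otherwise, so that `[[x_i, x_{i+2}], x_{i+1}] = Σ_j x_j p_{ij}`. -/
def pLie (k : Type) [Field k] (n : ℕ) (i : Fin (n - 2)) (j : Fin n) :
    FreeAlgebra k (Fin n) :=
  let X : Fin 3 → FreeAlgebra k (Fin n) := fun t => FreeAlgebra.ι k (genIdx n i t)
  if j = genIdx n i 0 then X 2 * X 1
  else if j = genIdx n i 1 then X 2 * X 0 - X 0 * X 2
  else if j = genIdx n i 2 then -(X 0 * X 1)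
  else 0

/-- The image `p̄_{ij}` of `p_{ij}` in `Aₙ`. -/
def PbarL (k : Type) [Field k] (n : ℕ) (i : Fin (n - 2)) (j : Fin n) : AnAlg k n :=
  RingQuot.mkAlgHom k (lieRelRel k n) (pLie k n i j)

/-- The augmentation `ε : Aₙ → k`, the unique `k`-algebra map sending every `x̄_j` to `0`. -/
def augL (k : Type) [Field k] (n : ℕ) : AnAlg k n →ₐ[k] k :=
  RingQuot.liftAlgHom k ⟨FreeAlgebra.lift k (fun _ => (0 : k)), by
    rintro a b ⟨rfl, i, rfl⟩
    simp [lieRel, FreeAlgebra.lift_ι_apply]⟩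

/-- The `A`-module `M` has projective dimension at most 2: there is an exact sequence
`0 → P₂ → P₁ → P₀ → M → 0` with all `Pᵢ` projective. -/
def HasProjDimLE2 (A : Type) [Ring A] (M : Type u) [AddCommGroup M] [Module A M] : Prop :=
  ∃ P₂ P₁ P₀ : ModuleCat.{u} A,
    Module.Projective A P₂ ∧ Module.Projective A P₁ ∧ Module.Projective A P₀ ∧
    ∃ (f₂ : P₂ →ₗ[A] P₁) (f₁ : P₁ →ₗ[A] P₀) (f₀ : P₀ →ₗ[A] M),
      Function.Injective f₂ ∧
      LinearMap.range f₂ = LinearMap.ker f₁ ∧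
      LinearMap.range f₁ = LinearMap.ker f₀ ∧
      Function.Surjective f₀

/-- The `A`-module `M` has projective dimension at most 1: there is an exact sequence
`0 → P₁ → P₀ → M → 0` with `P₀, P₁` projective. -/
def HasProjDimLE1 (A : Type) [Ring A] (M : Type u) [AddCommGroup M] [Module A M] : Prop :=
  ∃ P₁ P₀ : ModuleCat.{u} A,
    Module.Projective A P₁ ∧ Module.Projective A P₀ ∧
    ∃ (f₁ : P₁ →ₗ[A] P₀) (f₀ : P₀ →ₗ[A] M),
      Function.Injective f₁ ∧
      LinearMap.range f₁ = LinearMap.ker f₀ ∧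
      Function.Surjective f₀

lemma monoidAlgebra_indep (k : Type) [Field k] (n : ℕ)
    (Q : Fin n → MonoidAlgebra k (FreeMonoid (Fin n)))
    (h : ∑ j, MonoidAlgebra.single (FreeMonoid.of j) (1:k) * Q j = 0) (j : Fin n) :
    Q j = 0 := by
  ext w
  have h2 : (∑ j', MonoidAlgebra.single (FreeMonoid.of j') (1:k) * Q j').coeff
      (FreeMonoid.of j * w) = 0 := by rw [h]; rfl
  rw [MonoidAlgebra.coeff_sum, Finset.sum_apply'] at h2
  rw [Finset.sum_eq_single j] at h2
  · rw [MonoidAlgebra.coeff_single_mul_eq_mul_coeff (x := Q j) (m := FreeMonoid.of j)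
      (m₁ := FreeMonoid.of j * w) w
      (fun a _ => ⟨fun hh => mul_left_cancel hh, fun hh => by rw [hh]⟩)] at h2
    simpa using h2
  · intro j' _ hne
    apply MonoidAlgebra.single_mul_apply_of_not_exists_mul
    rintro ⟨d, hd⟩
    apply hne
    have := congrArg FreeMonoid.toList hd
    simp only [FreeMonoid.toList_of_mul] at this
    exact (List.cons.injEq _ _ _ _ ▸ this).1.symm ▸ rfl
  · simp

lemma free_indep (k : Type) [Field k] (n : ℕ) (q : Fin n → FreeAlgebra k (Fin n))
    (h : ∑ j, FreeAlgebra.ι k j * q j = 0) (j : Fin n) : q j = 0 := by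
  set e := FreeAlgebra.equivMonoidAlgebraFreeMonoid (R := k) (X := Fin n) with he_def
  have he : ∀ m : Fin n, e (FreeAlgebra.ι k m) = MonoidAlgebra.single (FreeMonoid.of m) 1 := by
    intro m
    simp [he_def, FreeAlgebra.equivMonoidAlgebraFreeMonoid, FreeAlgebra.lift_ι_apply,
      MonoidAlgebra.of_apply]
  have h' : ∑ j', MonoidAlgebra.single (FreeMonoid.of j') (1:k) * e (q j') = 0 := by
    have := congrArg e h
    simpa [map_sum, map_mul, he] using this
  have := monoidAlgebra_indep k n (fun j' => e (q j')) h' j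
  have : e (q j) = e 0 := by simpa using this
  exact e.injective this

section Good
variable (k : Type) [Field k] (n : ℕ)

/-- elements of the relation ideal together with a witness of the syzygy form -/
def GoodP (t : FreeAlgebra k (Fin n)) : Prop :=
  RingQuot.mkAlgHom k (lieRelRel k n) t = 0 ∧
  ∃ c : Fin n → FreeAlgebra k (Fin n),
    t = ∑ j, FreeAlgebra.ι k j * c j ∧
    ∃ b : Fin (n-2) → AnAlg k n,
      ∀ j, RingQuot.mkAlgHom k (lieRelRel k n) (c j) = ∑ i, PbarL k n i j * b i

lemma good_zero : GoodP k n 0 := by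
  refine ⟨map_zero _, fun _ => 0, by simp, fun _ => 0, fun j => by simp⟩

variable {k n}

lemma good_add {t₁ t₂ : FreeAlgebra k (Fin n)} (h₁ : GoodP k n t₁) (h₂ : GoodP k n t₂) :
    GoodP k n (t₁ + t₂) := by
  obtain ⟨hm₁, c₁, hc₁, b₁, hb₁⟩ := h₁
  obtain ⟨hm₂, c₂, hc₂, b₂, hb₂⟩ := h₂
  refine ⟨by rw [map_add, hm₁, hm₂, add_zero], fun j => c₁ j + c₂ j, ?_, fun i => b₁ i + b₂ i, ?_⟩
  · rw [hc₁, hc₂, ← Finset.sum_add_distrib]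
    exact Finset.sum_congr rfl fun j _ => (mul_add _ _ _).symm
  · intro j
    rw [map_add, hb₁ j, hb₂ j, ← Finset.sum_add_distrib]
    exact Finset.sum_congr rfl fun i _ => (mul_add _ _ _).symm

lemma good_smul (r : k) {t : FreeAlgebra k (Fin n)} (h : GoodP k n t) : GoodP k n (r • t) := by
  obtain ⟨hm, c, hc, b, hb⟩ := h
  refine ⟨by rw [map_smul, hm, smul_zero], fun j => r • c j, ?_, fun i => r • b i, ?_⟩
  · rw [hc, Finset.smul_sum]
    exact Finset.sum_congr rfl fun j _ => (mul_smul_comm _ _ _).symm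
  · intro j
    rw [map_smul, hb j, Finset.smul_sum]
    exact Finset.sum_congr rfl fun i _ => (mul_smul_comm _ _ _).symm

lemma good_neg {t : FreeAlgebra k (Fin n)} (h : GoodP k n t) : GoodP k n (-t) := by
  have := good_smul (-1 : k) h
  simpa [neg_one_smul] using this

lemma good_right {t : FreeAlgebra k (Fin n)} (h : GoodP k n t) (v : FreeAlgebra k (Fin n)) :
    GoodP k n (t * v) := by
  obtain ⟨hm, c, hc, b, hb⟩ := h
  refine ⟨by rw [map_mul, hm, zero_mul], fun j => c j * v, ?_,
    fun i => b i * RingQuot.mkAlgHom k (lieRelRel k n) v, ?_⟩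
  · rw [hc, Finset.sum_mul]
    exact Finset.sum_congr rfl fun j _ => (mul_assoc _ _ _)
  · intro j
    rw [map_mul, hb j, Finset.sum_mul]
    exact Finset.sum_congr rfl fun i _ => (mul_assoc _ _ _)

lemma good_left_ι (m : Fin n) {t : FreeAlgebra k (Fin n)} (h : GoodP k n t) :
    GoodP k n (FreeAlgebra.ι k m * t) := by
  obtain ⟨hm, c, hc, b, hb⟩ := h
  refine ⟨by rw [map_mul, hm, mul_zero], fun j => if j = m then t else 0, ?_, fun _ => 0, ?_⟩
  · have : ∀ j : Fin n, FreeAlgebra.ι k j * (if j = m then t else 0)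
        = if j = m then FreeAlgebra.ι k m * t else 0 := by
      intro j; split_ifs with hj
      · rw [hj]
      · rw [mul_zero]
    rw [Finset.sum_congr rfl fun j _ => this j, Finset.sum_ite_eq' Finset.univ m]
    simp
  · intro j
    simp only []
    split_ifs with hj <;> simp [hm]

lemma good_left (u : FreeAlgebra k (Fin n)) {t : FreeAlgebra k (Fin n)} (h : GoodP k n t) :
    GoodP k n (u * t) := by
  induction u using FreeAlgebra.induction generalizing t with
  | grade0 r => rw [← Algebra.smul_def]; exact good_smul r h
  | grade1 m => exact good_left_ι m h
  | mul u₁ u₂ ih₁ ih₂ => rw [mul_assoc]; exact ih₁ (ih₂ h)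
  | add u₁ u₂ ih₁ ih₂ => rw [add_mul]; exact good_add (ih₁ h) (ih₂ h)
end Good

section Rel
variable (k : Type) [Field k] (n : ℕ)

lemma genIdx_ne (i : Fin (n-2)) {s t : Fin 3} (h : s ≠ t) : genIdx n i s ≠ genIdx n i t := by
  intro hc
  apply h
  have := congrArg Fin.val hc
  simp only [genIdx] at this
  exact Fin.ext (by omega)

lemma lieRel_eq_sum (i : Fin (n-2)) :
    lieRel k n i = ∑ j, FreeAlgebra.ι k j * pLie k n i j := by
  have h01 : genIdx n i 0 ≠ genIdx n i 1 := genIdx_ne n i (by decide)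
  have h02 : genIdx n i 0 ≠ genIdx n i 2 := genIdx_ne n i (by decide)
  have h12 : genIdx n i 1 ≠ genIdx n i 2 := genIdx_ne n i (by decide)
  set X : Fin 3 → FreeAlgebra k (Fin n) := fun t => FreeAlgebra.ι k (genIdx n i t) with hX
  have key : ∀ j : Fin n, FreeAlgebra.ι k j * pLie k n i j =
      (if j = genIdx n i 0 then X 0 * (X 2 * X 1) else 0) +
      ((if j = genIdx n i 1 then X 1 * (X 2 * X 0 - X 0 * X 2) else 0) +
       (if j = genIdx n i 2 then X 2 * (-(X 0 * X 1)) else 0)) := by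
    intro j
    by_cases hj0 : j = genIdx n i 0
    · simp [pLie, hj0, h01, h02, hX]
    · by_cases hj1 : j = genIdx n i 1
      · simp [pLie, hj0, hj1, h01.symm, h12, hX]
      · by_cases hj2 : j = genIdx n i 2
        · simp [pLie, hj0, hj1, hj2, h02.symm, h12.symm, hX]
        · simp [pLie, hj0, hj1, hj2]
  rw [Finset.sum_congr rfl fun j _ => key j, Finset.sum_add_distrib, Finset.sum_add_distrib,
    Finset.sum_ite_eq' Finset.univ, Finset.sum_ite_eq' Finset.univ, Finset.sum_ite_eq' Finset.univ]
  simp only [Finset.mem_univ, if_true, lieRel]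
  noncomm_ring

lemma good_rel (i : Fin (n-2)) : GoodP k n (lieRel k n i) := by
  refine ⟨?_, fun j => pLie k n i j, lieRel_eq_sum k n i,
    fun i' => if i' = i then 1 else 0, ?_⟩
  · have h := RingQuot.mkAlgHom_rel k (s := lieRelRel k n) (⟨rfl, i, rfl⟩ :
      lieRelRel k n (lieRel k n i) 0)
    simpa using h
  · intro j
    have : ∀ i' : Fin (n-2), PbarL k n i' j * (if i' = i then 1 else 0)
        = if i' = i then PbarL k n i' j else 0 := by
      intro i'; split_ifs <;> simp
    rw [Finset.sum_congr rfl fun i' _ => this i', Finset.sum_ite_eq' Finset.univ]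
    simp [PbarL]

def goodCon : RingCon (FreeAlgebra k (Fin n)) where
  r a b := GoodP k n (a - b)
  iseqv := {
    refl := fun a => by simpa using good_zero k n
    symm := fun {a b} h => by simpa [neg_sub] using good_neg h
    trans := fun {a b c} h1 h2 => by
      have := good_add h1 h2
      simpa using this }
  add' := fun {a b c d} h1 h2 => by
    have := good_add h1 h2
    have e : a - b + (c - d) = a + c - (b + d) := by abel
    rwa [e] at this
  mul' := fun {a b c d} h1 h2 => by
    have := good_add (good_left a h2) (good_right h1 d)
    have e : a * (c - d) + (a - b) * d = a * c - b * d := by noncomm_ring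
    rwa [e] at this

lemma mk_zero_good (t : FreeAlgebra k (Fin n))
    (h : RingQuot.mkAlgHom k (lieRelRel k n) t = 0) : GoodP k n t := by
  have hrel : ∀ ⦃x y : FreeAlgebra k (Fin n)⦄, lieRelRel k n x y →
      (goodCon k n).mk' x = (goodCon k n).mk' y := by
    rintro x y ⟨rfl, i, rfl⟩
    refine RingCon.eq _ |>.2 ?_
    show GoodP k n (lieRel k n i - 0)
    simpa using good_rel k n i
  have hm : RingQuot.mkRingHom (lieRelRel k n) t = RingQuot.mkRingHom (lieRelRel k n) 0 := by
    have h0 : RingQuot.mkAlgHom k (lieRelRel k n) t = RingQuot.mkAlgHom k (lieRelRel k n) 0 := by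
      rw [h, map_zero]
    have ht' := DFunLike.congr_fun (RingQuot.mkAlgHom_coe k (lieRelRel k n)) t
    have h0' := DFunLike.congr_fun (RingQuot.mkAlgHom_coe k (lieRelRel k n))
      (0 : FreeAlgebra k (Fin n))
    rw [← ht', ← h0']
    exact h0
  have := congrArg (RingQuot.lift ⟨(goodCon k n).mk', hrel⟩) hm
  rw [RingQuot.lift_mkRingHom_apply, RingQuot.lift_mkRingHom_apply] at this
  have hg : (goodCon k n) t 0 := (RingCon.eq _).1 this
  have hg' : GoodP k n (t - 0) := hg
  simpa using hg'

end Rel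

/-- if `a₁,…,aₙ ∈ Aₙ` satisfy `Σ_j x̄_j a_j = 0`, then there exist
`b₁,…,b_{n-2} ∈ Aₙ` with `a_j = Σ_i p̄_{ij} b_i` for every `j`. -/
theorem An_syzygies_generated
    (k : Type) [Field k] (n : ℕ) (hn : 3 ≤ n)
    (a : Fin n → AnAlg k n)
    (ha : (∑ j, XbarL k n j * a j) = 0) :
    ∃ b : Fin (n - 2) → AnAlg k n, ∀ j, a j = ∑ i, PbarL k n i j * b i := by

  have hsur := RingQuot.mkAlgHom_surjective k (lieRelRel k n)
  choose ta hta using fun j => hsur (a j)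
  have hterm : ∀ j, RingQuot.mkAlgHom k (lieRelRel k n) (FreeAlgebra.ι k j * ta j)
      = XbarL k n j * a j := fun j => by rw [map_mul, hta j]; rfl
  have ht : RingQuot.mkAlgHom k (lieRelRel k n) (∑ j, FreeAlgebra.ι k j * ta j) = 0 := by
    rw [map_sum, Finset.sum_congr rfl fun j _ => hterm j]
    exact ha
  obtain ⟨-, c, hc, b, hb⟩ := mk_zero_good k n _ ht
  refine ⟨b, fun j => ?_⟩
  have hz : ∑ j', FreeAlgebra.ι k j' * (ta j' - c j') = 0 := by
    have step : ∀ j' : Fin n, FreeAlgebra.ι k j' * (ta j' - c j')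
        = FreeAlgebra.ι k j' * ta j' - FreeAlgebra.ι k j' * c j' := fun j' => mul_sub _ _ _
    rw [Finset.sum_congr rfl fun j' _ => step j', Finset.sum_sub_distrib, ← hc, sub_self]
  have hjc : ta j = c j := sub_eq_zero.1 (free_indep k n _ hz j)
  rw [← hta j, hjc, hb j]

end
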